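/- arXiv:2308.00315 — 5 statements merged into one kernel-verified Lean document; each statement's English description precedes it below -/
import Mathlib

section
/- Let n ≥ 1 and 1 ≤ k ≤ n be integers. Define t_{m} = C(n-1, k-1)^m · ∏_{ℓ=1}^{m-1} C((ℓ+1)n - 1, n-1) for m ≥ 0 (with the empty product equal to 1). Then for every m ≥ 0, ∑_{j=0}^{m} t_j/(j·n)! · t_{m-j}/((m-j)·n)! = (1/m!) · (2/n! · C(n-1, k-1))^m. -/
/-- For n ≥ 1, 1 ≤ k ≤ n, with
t_m = C(n-1,k-1)^m · ∏_{ℓ=1}^{m-1} C((ℓ+1)n-1, n-1), we have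
∑_{j=0}^m t_j/(jn)! · t_{m-j}/((m-j)n)! = (1/m!) · (2/n! · C(n-1,k-1))^m. -/
theorem stmt_0 (n k : ℕ) (hn : 1 ≤ n) (hk1 : 1 ≤ k) (hkn : k ≤ n)
    (t : ℕ → ℚ)
    (ht : ∀ m, t m = (Nat.choose (n - 1) (k - 1) : ℚ) ^ m *
      ∏ ℓ ∈ Finset.Icc 1 (m - 1), (Nat.choose ((ℓ + 1) * n - 1) (n - 1) : ℚ)) :
    ∀ m, ∑ j ∈ Finset.range (m + 1),
        t j / (Nat.factorial (j * n) : ℚ) * (t (m - j) / (Nat.factorial ((m - j) * n) : ℚ)) =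
      (1 / (Nat.factorial m : ℚ)) *
        ((2 / (Nat.factorial n : ℚ)) * (Nat.choose (n - 1) (k - 1) : ℚ)) ^ m := by
  set C : ℚ := (Nat.choose (n - 1) (k - 1) : ℚ) with hCdef
  have hrec : ∀ m, t (m + 1) = t m * C * (Nat.choose ((m + 1) * n - 1) (n - 1) : ℚ) := by
    intro m
    rw [ht, ht]
    rcases m with _ | mm
    · simp
    · have h1 : (mm + 1 + 1) - 1 = mm + 1 := rfl
      have h2 : (mm + 1) - 1 = mm := rfl
      rw [h1, h2, Finset.prod_Icc_succ_top (by omega : 1 ≤ mm + 1)]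
      ring
  have hkey : ∀ m, t m / (Nat.factorial (m * n) : ℚ) =
      (C / (Nat.factorial n : ℚ)) ^ m / (Nat.factorial m : ℚ) := by
    intro m
    induction m with
    | zero => simp [ht 0]
    | succ m ih =>
      set B : ℕ := Nat.choose ((m + 1) * n - 1) (n - 1) with hBdef
      have hle : n ≤ (m + 1) * n := Nat.le_mul_of_pos_left n (by omega)
      have hmn : (m + 1) * n = m * n + n := by ring
      have hB : B * (Nat.factorial (n - 1) * Nat.factorial (m * n)) =
          Nat.factorial ((m + 1) * n - 1) := by
        have h1 : n - 1 ≤ (m + 1) * n - 1 := by omega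
        have h2 : (m + 1) * n - 1 - (n - 1) = m * n := by omega
        have h3 := Nat.choose_mul_factorial_mul_factorial h1
        rw [h2] at h3
        rw [← h3, hBdef]
        ring
      have hfac : Nat.factorial ((m + 1) * n) = ((m + 1) * n) * Nat.factorial ((m + 1) * n - 1) := by
        have h3 : (m + 1) * n = ((m + 1) * n - 1) + 1 := by omega
        conv_lhs => rw [h3]
        rw [Nat.factorial_succ]
        congr 1
        omega
      have hnfacN : Nat.factorial n = n * Nat.factorial (n - 1) := by
        have h3 : n = (n - 1) + 1 := by omega
        conv_lhs => rw [h3]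
        rw [Nat.factorial_succ]
        congr 1
        omega
      have hnfac : (Nat.factorial n : ℚ) = n * Nat.factorial (n - 1) := by
        rw [hnfacN]; push_cast; ring
      have hBpos : 0 < B := Nat.choose_pos (by omega)
      have hfQ : (Nat.factorial ((m + 1) * n) : ℚ) =
          ((m + 1) * n) * ((B : ℚ) * (Nat.factorial (n - 1) * Nat.factorial (m * n))) := by
        rw [hfac, ← hB]; push_cast; ring
      have htm : t m = ((C / (Nat.factorial n : ℚ)) ^ m / (Nat.factorial m : ℚ)) *
          (Nat.factorial (m * n) : ℚ) := by
        rw [← ih]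
        field_simp
      rw [hrec m, htm, hfQ, hnfac, Nat.factorial_succ]
      rw [← hBdef]
      have hBne : (B : ℚ) ≠ 0 := by exact_mod_cast hBpos.ne'
      have h1 : (Nat.factorial (n - 1) : ℚ) ≠ 0 := by positivity
      have h2' : (Nat.factorial (m * n) : ℚ) ≠ 0 := by positivity
      have h3 : (Nat.factorial m : ℚ) ≠ 0 := by positivity
      have h4 : ((n : ℚ)) ≠ 0 := by positivity
      have h5 : ((m : ℚ) + 1) ≠ 0 := by positivity
      push_cast
      field_simp
      have e1 : (n:ℚ) * (n:ℚ)⁻¹ = 1 := mul_inv_cancel₀ h4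
      have e2 : (Nat.factorial (n - 1) : ℚ) * (Nat.factorial (n - 1) : ℚ)⁻¹ = 1 := mul_inv_cancel₀ h1
      linear_combination (-(C * C ^ m * (↑n)⁻¹ ^ m * (↑(n - 1).factorial)⁻¹ ^ m) * ((Nat.factorial (n - 1) : ℚ) * (Nat.factorial (n - 1) : ℚ)⁻¹)) * e1 + (-(C * C ^ m * (↑n)⁻¹ ^ m * (↑(n - 1).factorial)⁻¹ ^ m)) * e2
  intro m
  calc ∑ j ∈ Finset.range (m + 1),
        t j / (Nat.factorial (j * n) : ℚ) * (t (m - j) / (Nat.factorial ((m - j) * n) : ℚ))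
      = ∑ j ∈ Finset.range (m + 1),
        ((C / (Nat.factorial n : ℚ)) ^ m) * ((Nat.choose m j : ℚ) / (Nat.factorial m : ℚ)) := by
        apply Finset.sum_congr rfl
        intro j hj
        have hjm : j ≤ m := by simpa [Nat.lt_succ_iff] using hj
        rw [hkey j, hkey (m - j), div_mul_div_comm, ← pow_add,
          (by omega : j + (m - j) = m)]
        have hch : (Nat.choose m j : ℚ) * (Nat.factorial j) * (Nat.factorial (m - j)) =
            Nat.factorial m := by
          exact_mod_cast Nat.choose_mul_factorial_mul_factorial hjm
        have hj1 : (Nat.factorial j : ℚ) ≠ 0 := by positivity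
        have hj2 : (Nat.factorial (m - j) : ℚ) ≠ 0 := by positivity
        have hj3 : (Nat.factorial m : ℚ) ≠ 0 := by positivity
        have hdiv : (Nat.choose m j : ℚ) / (Nat.factorial m : ℚ) =
            1 / ((Nat.factorial j : ℚ) * (Nat.factorial (m - j) : ℚ)) := by
          rw [div_eq_div_iff hj3 (by positivity)]
          linarith [hch]
        rw [hdiv]
        ring
    _ = (1 / (Nat.factorial m : ℚ)) *
        ((2 / (Nat.factorial n : ℚ)) * C) ^ m := by
        rw [← Finset.mul_sum]
        have hs : ∑ j ∈ Finset.range (m + 1), ((Nat.choose m j : ℚ) / (Nat.factorial m : ℚ)) =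
            2 ^ m / (Nat.factorial m : ℚ) := by
          rw [← Finset.sum_div]
          congr 1
          exact_mod_cast Nat.sum_range_choose m
        rw [hs, show (2 / (Nat.factorial n : ℚ)) * C = 2 * (C / (Nat.factorial n : ℚ)) by ring,
          mul_pow]
        ring
end

section
/- For every integer m ≥ 1, (2^{m-1}·(3m+1)!)/(3^m·(3m-1)·m!) is a positive integer. -/
/-- Product of (3k+2)(3k+1) for k < m. -/
def Paux (m : ℕ) : ℕ := ∏ k ∈ Finset.range m, (3 * k + 2) * (3 * k + 1)

lemma Paux_pos (m : ℕ) : 0 < Paux m := by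
  apply Finset.prod_pos
  intro k _
  positivity

lemma Paux_key (m : ℕ) : Paux m * (3 ^ m * Nat.factorial m) = Nat.factorial (3 * m) := by
  induction m with
  | zero => simp [Paux]
  | succ n ih =>
    have hR : Nat.factorial (3 * (n + 1))
        = (3 * n + 3) * ((3 * n + 2) * ((3 * n + 1) * Nat.factorial (3 * n))) := by
      rw [show 3 * (n + 1) = 3 * n + 1 + 1 + 1 from by ring,
        Nat.factorial_succ, Nat.factorial_succ, Nat.factorial_succ]
    rw [Paux, Finset.prod_range_succ, ← Paux, hR, ← ih, Nat.factorial_succ, pow_succ]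
    ring

/-- For m ≥ 1, (2^{m-1}·(3m+1)!)/(3^m·(3m-1)·m!) is a positive integer. -/
theorem stmt_3 (m : ℕ) (hm : 1 ≤ m) :
    ∃ d : ℕ, 0 < d ∧
      (d : ℚ) = (2 ^ (m - 1) * Nat.factorial (3 * m + 1) : ℚ) /
        (3 ^ m * (3 * m - 1 : ℕ) * Nat.factorial m) := by
  obtain ⟨n, rfl⟩ := Nat.exists_eq_add_of_le hm
  have hP := Paux_pos n
  refine ⟨2 ^ n * (3 * n + 4) * (3 * n + 1) * Paux n, by positivity, ?_⟩
  have hnat : (2 ^ n * (3 * n + 4) * (3 * n + 1) * Paux n) *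
      (3 ^ (n + 1) * (3 * n + 2) * Nat.factorial (n + 1))
      = 2 ^ n * Nat.factorial (3 * n + 4) := by
    have hk := Paux_key (n + 1)
    rw [Paux, Finset.prod_range_succ, ← Paux] at hk
    have hf : Nat.factorial (3 * n + 4) = (3 * n + 4) * Nat.factorial (3 * (n + 1)) := by
      rw [show 3 * n + 4 = 3 * (n + 1) + 1 from by ring, Nat.factorial_succ]
    rw [hf, ← hk]
    ring
  have h1 : 1 + n - 1 = n := by omega
  have h2 : 3 * (1 + n) + 1 = 3 * n + 4 := by ring
  have h3 : (3 * (1 + n) - 1 : ℕ) = 3 * n + 2 := by omega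
  rw [h1, h2, h3, Nat.add_comm 1 n]
  have hden : ((3 : ℚ) ^ (n + 1) * ((3 * n + 2 : ℕ) : ℚ) * (Nat.factorial (n + 1) : ℚ)) ≠ 0 := by
    refine mul_ne_zero (mul_ne_zero (by positivity) ?_) ?_
    · exact Nat.cast_ne_zero.mpr (by omega)
    · exact Nat.cast_ne_zero.mpr (Nat.factorial_ne_zero _)
  rw [eq_div_iff hden]
  have hq := congrArg (Nat.cast (R := ℚ)) hnat
  push_cast at hq ⊢
  linear_combination hq
end

section
/- Define sequences a_{n,k} (for n ≥ 1, 1 ≤ k ≤ n) and b_{n,s,t} (for n ≥ 1, 0 ≤ s,t ≤ n-1) by: a_{n,1} = (n+2)(2n-2)!/(2(n-2)!) for n ≥ 2; a_{n,k} = C(n-k+2, 2)·(2n-k)!/(2(n-k+1)!) for 2 ≤ k ≤ n-1; a_{n,n} = n!; b_{n,0,0} = (2n-2)!/(n-2)!; b_{n,s,0} = b_{n,0,s} = (2n-2-s)!(n-s)/(2(n-1-s)!) for 1 ≤ s ≤ n-2; b_{n,n-1,0} = b_{n,0,n-1} = (n-1)!; and b_{n,s,t} = (2n-2-s-t)!·((n-s-t)(n-s-t+1)+2)/(4·(n-s-t)!)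 for s,t ≥ 1 with s+t ≤ n-1. Then for n ≥ 3 and 2 ≤ k ≤ n-2, the recursion a_{n,k} = 2·a_{n,k+1} + (k-2)·a_{n-1,k-1} + 2·b_{n,k-1,0} holds. -/
/-- with the closed forms for a_{n,k} and b_{n,s,t}, for n ≥ 3 and
2 ≤ k ≤ n-2 the recursion a_{n,k} = 2·a_{n,k+1} + (k-2)·a_{n-1,k-1} + 2·b_{n,k-1,0} holds. -/
theorem stmt_4 (a : ℕ → ℕ → ℚ) (b : ℕ → ℕ → ℕ → ℚ)
    (ha1 : ∀ n, 2 ≤ n → a n 1 =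
      ((n : ℚ) + 2) * (Nat.factorial (2 * n - 2) : ℚ) / (2 * (Nat.factorial (n - 2) : ℚ)))
    (hak : ∀ n k, 2 ≤ k → k ≤ n - 1 → a n k =
      (Nat.choose (n - k + 2) 2 : ℚ) * (Nat.factorial (2 * n - k) : ℚ) /
        (2 * (Nat.factorial (n - k + 1) : ℚ)))
    (han : ∀ n, a n n = (Nat.factorial n : ℚ))
    (hb00 : ∀ n, 2 ≤ n → b n 0 0 =
      (Nat.factorial (2 * n - 2) : ℚ) / (Nat.factorial (n - 2) : ℚ))
    (hbs0 : ∀ n s, 1 ≤ s → s ≤ n - 2 →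
      b n s 0 = (Nat.factorial (2 * n - 2 - s) : ℚ) * ((n : ℚ) - s) /
        (2 * (Nat.factorial (n - 1 - s) : ℚ)) ∧
      b n 0 s = (Nat.factorial (2 * n - 2 - s) : ℚ) * ((n : ℚ) - s) /
        (2 * (Nat.factorial (n - 1 - s) : ℚ)))
    (hbn1 : ∀ n, 1 ≤ n → b n (n - 1) 0 = (Nat.factorial (n - 1) : ℚ) ∧
      b n 0 (n - 1) = (Nat.factorial (n - 1) : ℚ))
    (hbst : ∀ n s t, 1 ≤ s → 1 ≤ t → s + t ≤ n - 1 →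
      b n s t = (Nat.factorial (2 * n - 2 - s - t) : ℚ) *
        (((n - s - t) * (n - s - t + 1) + 2 : ℕ) : ℚ) /
        (4 * (Nat.factorial (n - s - t) : ℚ))) :
    ∀ n k, 3 ≤ n → 2 ≤ k → k ≤ n - 2 →
      a n k = 2 * a n (k + 1) + ((k : ℚ) - 2) * a (n - 1) (k - 1) + 2 * b n (k - 1) 0 := by
  intro n k hn hk hkn
  obtain ⟨i, rfl⟩ : ∃ i, k = i + 2 := ⟨k - 2, by omega⟩
  obtain ⟨j, rfl⟩ : ∃ j, n = i + j + 4 := ⟨n - i - 4, by omega⟩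
  have hb := (hbs0 (i + j + 4) (i + 1) (by omega) (by omega)).1
  rw [hak (i + j + 4) (i + 2) (by omega) (by omega),
      hak (i + j + 4) (i + 2 + 1) (by omega) (by omega),
      show i + 2 - 1 = i + 1 by omega, hb]
  have e1 : i + j + 4 - (i + 2) + 2 = j + 4 := by omega
  have e2 : 2 * (i + j + 4) - (i + 2) = i + 2 * j + 6 := by omega
  have e3 : i + j + 4 - (i + 2) + 1 = j + 3 := by omega
  have e4 : i + j + 4 - (i + 2 + 1) + 2 = j + 3 := by omega
  have e5 : 2 * (i + j + 4) - (i + 2 + 1) = i + 2 * j + 5 := by omega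
  have e6 : i + j + 4 - (i + 2 + 1) + 1 = j + 2 := by omega
  have e7 : 2 * (i + j + 4) - 2 - (i + 1) = i + 2 * j + 5 := by omega
  have e8 : i + j + 4 - 1 - (i + 1) = j + 2 := by omega
  rw [e1, e2, e3, e4, e5, e6, e7, e8]
  have hf2 : (Nat.factorial (j + 2) : ℚ) ≠ 0 := by
    exact_mod_cast Nat.factorial_ne_zero _
  have hf3 : (Nat.factorial (j + 3) : ℚ) = (j + 3) * Nat.factorial (j + 2) := by
    rw [Nat.factorial_succ]; push_cast; ring
  have hf6 : (Nat.factorial (i + 2 * j + 6) : ℚ)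
      = (i + 2 * j + 6) * Nat.factorial (i + 2 * j + 5) := by
    rw [Nat.factorial_succ]; push_cast; ring
  have hc4 : ((j + 4).choose 2 : ℚ) = (j + 4) * (j + 3) / 2 := by
    rw [Nat.cast_choose_two]; push_cast; ring
  have hc3 : ((j + 3).choose 2 : ℚ) = (j + 3) * (j + 2) / 2 := by
    rw [Nat.cast_choose_two]; push_cast; ring
  rcases Nat.eq_zero_or_pos i with hi | hi
  · subst hi
    have h0 : ((0 + 2 : ℕ) : ℚ) - 2 = 0 := by norm_num
    rw [h0, zero_mul, hf3, hf6, hc4, hc3]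
    push_cast
    field_simp
    ring
  · obtain ⟨i', rfl⟩ : ∃ i', i = i' + 1 := ⟨i - 1, by omega⟩
    rw [hak (i' + 1 + j + 4 - 1) (i' + 1 + 1) (by omega) (by omega)]
    have e9 : i' + 1 + j + 4 - 1 - (i' + 1 + 1) + 2 = j + 4 := by omega
    have e10 : 2 * (i' + 1 + j + 4 - 1) - (i' + 1 + 1) = i' + 1 + 2 * j + 5 := by omega
    have e11 : i' + 1 + j + 4 - 1 - (i' + 1 + 1) + 1 = j + 3 := by omega
    rw [e9, e10, e11, hf3, hf6, hc4, hc3]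
    have hf5 : (Nat.factorial (i' + 1 + 2 * j + 5) : ℚ) ≠ 0 := by
      exact_mod_cast Nat.factorial_ne_zero _
    push_cast
    field_simp
    ring
end

section
/- For integers m ≥ 2 and h ≥ 0, define t_{h} recursively by t_0 = 1 and t_h = (t_{h-1})^m · M(h) for h ≥ 1, where M(h) is the multinomial coefficient ( (m^{h+1}-1)/(m-1) - 1 )! / ( ((m^h - 1)/(m-1))! )^m. Then for all h ≥ 0, t_h = ∏_{j=1}^{h} α_j^{m^{h-j}}, where α_j = ( (m^{j+1}-m)/(m-1) )! / ( ((m^j - 1)/(m-1))! )^m. -/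
lemma key_div (m : ℕ) (hm : 2 ≤ m) (k : ℕ) :
    (m ^ (k + 1) - 1) / (m - 1) - 1 = (m ^ (k + 1) - m) / (m - 1) := by
  have hd : (m - 1) ∣ m ^ (k + 1) - 1 := by
    simpa using Nat.sub_dvd_pow_sub_pow m 1 (k + 1)
  obtain ⟨q, hq⟩ := hd
  have hm1 : 1 ≤ m := by omega
  have hpow : m ≤ m ^ (k + 1) := Nat.le_self_pow (by omega) m
  have h2 : m ^ (k + 1) - m = (m - 1) * (q - 1) := by
    have hq1 : 1 ≤ q := by
      rcases q with _ | q
      · simp at hq; omega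
      · omega
    have h3 : (m - 1) * (q - 1) = (m - 1) * q - (m - 1) * 1 := Nat.mul_sub (m-1) q 1
    omega
  rw [hq, h2, Nat.mul_div_cancel_left _ (by omega), Nat.mul_div_cancel_left _ (by omega)]

/-- for m ≥ 2, with t_0 = 1 and t_h = t_{h-1}^m · M(h) where M(h) is the
multinomial coefficient ((m^{h+1}-1)/(m-1) - 1)! / (((m^h-1)/(m-1))!)^m, we have
t_h = ∏_{j=1}^h α_j^{m^{h-j}} with α_j = ((m^{j+1}-m)/(m-1))! / (((m^j-1)/(m-1))!)^m. -/
theorem stmt_9 (m : ℕ) (hm : 2 ≤ m) (t : ℕ → ℚ)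
    (ht0 : t 0 = 1)
    (hth : ∀ h, 1 ≤ h → t h = t (h - 1) ^ m *
      ((Nat.factorial ((m ^ (h + 1) - 1) / (m - 1) - 1) : ℚ) /
        (Nat.factorial ((m ^ h - 1) / (m - 1)) : ℚ) ^ m)) :
    ∀ h, t h = ∏ j ∈ Finset.Icc 1 h,
      ((Nat.factorial ((m ^ (j + 1) - m) / (m - 1)) : ℚ) /
        (Nat.factorial ((m ^ j - 1) / (m - 1)) : ℚ) ^ m) ^ (m ^ (h - j)) := by
  intro h
  induction h with
  | zero => simpa using ht0
  | succ n ih =>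
    have hrec := hth (n + 1) (by omega)
    simp only [Nat.add_sub_cancel] at hrec
    rw [hrec, ih, key_div m hm (n + 1)]
    rw [Finset.prod_Icc_succ_top (by omega : 1 ≤ n + 1)]
    rw [← Finset.prod_pow]
    simp only [Nat.sub_self, pow_zero, pow_one]
    congr 1
    apply Finset.prod_congr rfl
    intro j hj
    simp only [Finset.mem_Icc] at hj
    rw [← pow_mul]
    congr 1
    rw [← pow_succ]
    congr 1
    omega
end

section
/- For integers n ≥ 2 and 1 ≤ s ≤ n-2, the identity (2n-2-s)!·(n-s)/(2·(n-1-s)!) = b holds where b is defined by the recursion b_{n,s} = a_{n-1,s+1} + b'_{n,s} + b_{n,s+1} + ∑_{q=1}^{s} C(2n-s-3, q-1)·(q-1)!·b_{n-q,s-q}, with a_{n,k} and b', b given by their closed forms: a_{n,k} = C(n-k+2,2)(2n-k)!/(2(n-k+1)!) for 2 ≤ k ≤ n-1, a_{n,n}=n!, b_{n,s} = (2n-2-s)!(n-s)/(2(n-1-s)!) for 1 ≤ s ≤ n-2, b_{n,n-1} = (n-1)!, b_{n,0} = (2n-2)!/(n-2)!, and b'_{n,s} = b_{n,s,1} = (2n-3-s)!·((n-s-1)(n-s)+2)/(4·(n-s-1)!)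 for 1 ≤ s ≤ n-2. Verify this recursion holds for all n ≥ 4 and 1 ≤ s ≤ n-3. -/
/-- with the stated closed forms, for n ≥ 4 and 1 ≤ s ≤ n-3 the recursion
b_{n,s,0} = a_{n-1,s+1} + b_{n,s,1} + b_{n,s+1,0} + ∑_{q=1}^s C(2n-s-3,q-1)(q-1)! b_{n-q,s-q,0}
holds. -/
theorem stmt_12 (a : ℕ → ℕ → ℚ) (b : ℕ → ℕ → ℕ → ℚ)
    (hak : ∀ n k, 2 ≤ k → k ≤ n - 1 → a n k =
      (Nat.choose (n - k + 2) 2 : ℚ) * (Nat.factorial (2 * n - k) : ℚ) /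
        (2 * (Nat.factorial (n - k + 1) : ℚ)))
    (han : ∀ n, a n n = (Nat.factorial n : ℚ))
    (hbs0 : ∀ n s, 1 ≤ s → s ≤ n - 2 →
      b n s 0 = (Nat.factorial (2 * n - 2 - s) : ℚ) * ((n : ℚ) - s) /
        (2 * (Nat.factorial (n - 1 - s) : ℚ)))
    (hbn1 : ∀ n, 1 ≤ n → b n (n - 1) 0 = (Nat.factorial (n - 1) : ℚ))
    (hb00 : ∀ n, 2 ≤ n → b n 0 0 =
      (Nat.factorial (2 * n - 2) : ℚ) / (Nat.factorial (n - 2) : ℚ))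
    (hbs1 : ∀ n s, 1 ≤ s → s ≤ n - 2 →
      b n s 1 = (Nat.factorial (2 * n - 3 - s) : ℚ) *
        (((n - s - 1) * (n - s) + 2 : ℕ) : ℚ) / (4 * (Nat.factorial (n - s - 1) : ℚ))) :
    ∀ n s, 4 ≤ n → 1 ≤ s → s ≤ n - 3 →
      b n s 0 = a (n - 1) (s + 1) + b n s 1 + b n (s + 1) 0 +
        ∑ q ∈ Finset.Icc 1 s,
          (Nat.choose (2 * n - s - 3) (q - 1) : ℚ) * (Nat.factorial (q - 1) : ℚ) *
            b (n - q) (s - q) 0 := by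
  intro n s hn hs1 hs3
  obtain ⟨t, rfl⟩ : ∃ t, s = t + 1 := ⟨s - 1, by omega⟩
  obtain ⟨k, rfl⟩ : ∃ k, n = t + k + 4 := ⟨n - t - 4, by omega⟩
  have hfne : ∀ m : ℕ, (Nat.factorial m : ℚ) ≠ 0 := fun m =>
    Nat.cast_ne_zero.mpr (Nat.factorial_ne_zero m)
  have hsum : ∑ q ∈ Finset.Icc 1 (t + 1),
      (Nat.choose (2 * (t + k + 4) - (t + 1) - 3) (q - 1) : ℚ) *
        (Nat.factorial (q - 1) : ℚ) * b (t + k + 4 - q) (t + 1 - q) 0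
      = (t : ℚ) * ((Nat.factorial (t + 2 * k + 4) : ℚ) * ((k : ℚ) + 3) /
          (2 * (Nat.factorial (k + 2) : ℚ)))
        + (Nat.factorial (t + 2 * k + 4) : ℚ) / (Nat.factorial (k + 1) : ℚ) := by
    rw [Finset.sum_Icc_succ_top (by omega)]
    have h1 : ∑ q ∈ Finset.Icc 1 t,
        (Nat.choose (2 * (t + k + 4) - (t + 1) - 3) (q - 1) : ℚ) *
          (Nat.factorial (q - 1) : ℚ) * b (t + k + 4 - q) (t + 1 - q) 0
        = ∑ _q ∈ Finset.Icc 1 t,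
          ((Nat.factorial (t + 2 * k + 4) : ℚ) * ((k : ℚ) + 3) /
            (2 * (Nat.factorial (k + 2) : ℚ))) := by
      refine Finset.sum_congr rfl fun q hq => ?_
      simp only [Finset.mem_Icc] at hq
      rw [hbs0 _ _ (by omega) (by omega)]
      rw [show 2 * (t + k + 4 - q) - 2 - (t + 1 - q) = t + 2 * k + 5 - q by omega,
          show (t + k + 4 - q) - 1 - (t + 1 - q) = k + 2 by omega,
          show 2 * (t + k + 4) - (t + 1) - 3 = t + 2 * k + 4 by omega,
          show ((t + k + 4 - q : ℕ) : ℚ) - ((t + 1 - q : ℕ) : ℚ) = (k : ℚ) + 3 by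
            rw [Nat.cast_sub (by omega), Nat.cast_sub (by omega)]; push_cast; ring]
      have key := Nat.choose_mul_factorial_mul_factorial
        (show q - 1 ≤ t + 2 * k + 4 by omega)
      rw [show t + 2 * k + 4 - (q - 1) = t + 2 * k + 5 - q by omega] at key
      have key' : ((t + 2 * k + 4).choose (q - 1) : ℚ) * (Nat.factorial (q - 1) : ℚ) *
          (Nat.factorial (t + 2 * k + 5 - q) : ℚ) = (Nat.factorial (t + 2 * k + 4) : ℚ) := by
        exact_mod_cast congrArg (Nat.cast : ℕ → ℚ) key
      rw [← key']; ring
    rw [h1, Finset.sum_const, Nat.card_Icc]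
    rw [show t + k + 4 - (t + 1) = k + 3 by omega, show t + 1 - (t + 1) = 0 by omega,
        show t + 1 - 1 = t by omega]
    rw [hb00 (k + 3) (by omega)]
    rw [show 2 * (k + 3) - 2 = 2 * k + 4 by omega, show k + 3 - 2 = k + 1 by omega,
        show 2 * (t + k + 4) - (t + 1) - 3 = t + 2 * k + 4 by omega]
    have key := Nat.choose_mul_factorial_mul_factorial
      (show t ≤ t + 2 * k + 4 by omega)
    rw [show t + 2 * k + 4 - t = 2 * k + 4 by omega] at key
    have key' : ((t + 2 * k + 4).choose t : ℚ) * (Nat.factorial t : ℚ) *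
        (Nat.factorial (2 * k + 4) : ℚ) = (Nat.factorial (t + 2 * k + 4) : ℚ) := by
      exact_mod_cast congrArg (Nat.cast : ℕ → ℚ) key
    rw [nsmul_eq_mul, ← key']; ring
  rw [hsum, hbs0 _ _ (by omega) (by omega), hbs1 _ _ (by omega) (by omega),
      hbs0 _ _ (by omega) (by omega), hak _ _ (by omega) (by omega)]
  rw [show 2 * (t + k + 4) - 2 - (t + 1) = t + 2 * k + 5 by omega,
      show (t + k + 4) - 1 - (t + 1) = k + 2 by omega,
      show 2 * (t + k + 4) - 3 - (t + 1) = t + 2 * k + 4 by omega,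
      show (t + k + 4) - (t + 1) - 1 = k + 2 by omega,
      show (t + k + 4) - (t + 1) = k + 3 by omega,
      show 2 * (t + k + 4) - 2 - (t + 1 + 1) = t + 2 * k + 4 by omega,
      show (t + k + 4) - 1 - (t + 1 + 1) = k + 1 by omega,
      show 2 * (t + k + 4 - 1) - (t + 1 + 1) = t + 2 * k + 4 by omega,
      show t + 2 * k + 5 = (t + 2 * k + 4) + 1 by omega,
      Nat.factorial_succ (t + 2 * k + 4),
      show k + 2 = (k + 1) + 1 by omega,
      Nat.factorial_succ (k + 1),
      Nat.cast_choose_two]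
  have h3 := hfne (k + 1)
  have h4 : ((k : ℚ) + 1) + 1 ≠ 0 := by positivity
  have h5 : ((t : ℚ)) + 2 * (k : ℚ) + 4 + 1 ≠ 0 := by positivity
  push_cast
  field_simp
  ring
end
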